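/- arXiv:2605.18538 — 5 statements merged into one kernel-verified Lean document; each statement's English description precedes it below -/
import Mathlib

section
/- Let H be the subring of the rational quaternions ℍ[ℚ] generated by i, j, and the element (1 + i + j + k)/2 (the Hurwitz order). Then the set {x : ℍ[ℚ] | x ∈ H ∧ normSq x = 1} has exactly 24 elements. -/
open Quaternion

def qI : Quaternion ℚ := ⟨0,1,0,0⟩
def qJ : Quaternion ℚ := ⟨0,0,1,0⟩
def qW : Quaternion ℚ := ⟨1/2,1/2,1/2,1/2⟩

/-- The Hurwitz order, given by an explicit carrier: the ℤ-span of 1, i, j, ω. -/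
def Hur : Subring (Quaternion ℚ) where
  carrier := {x | ∃ a b c d : ℤ, x = ⟨(a : ℚ) + d/2, b + d/2, c + d/2, d/2⟩}
  one_mem' := ⟨1, 0, 0, 0, by ext <;> norm_num⟩
  zero_mem' := ⟨0, 0, 0, 0, by ext <;> norm_num⟩
  add_mem' := by
    rintro x y ⟨a,b,c,d,rfl⟩ ⟨p,q,r,s,rfl⟩
    exact ⟨a+p, b+q, c+r, d+s, by erw [QuaternionAlgebra.mk_add_mk]; ext <;> simp <;> push_cast <;> ring⟩
  neg_mem' := by
    rintro x ⟨a,b,c,d,rfl⟩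
    exact ⟨-a, -b, -c, -d, by erw [QuaternionAlgebra.neg_mk]; ext <;> simp <;> push_cast <;> ring⟩
  mul_mem' := by
    rintro x y ⟨a,b,c,d,rfl⟩ ⟨p,q,r,s,rfl⟩
    refine ⟨a*p - b*q - b*r - b*s + c*q - c*r - d*r - d*s,
            a*q + b*p - b*r + c*q + c*s + d*q - d*r,
            a*r - b*r - b*s + c*p + c*q + c*s + d*q,
            a*s + 2*b*r + b*s - 2*c*q - c*s + d*p - d*q + d*r + d*s, ?_⟩
    erw [QuaternionAlgebra.mk_mul_mk]
    ext <;> simp [Quaternion.re_mul, Quaternion.imI_mul, Quaternion.imJ_mul, Quaternion.imK_mul]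
      <;> push_cast <;> ring

lemma hcoe_mem_closure (a b c d : ℤ) :
    (⟨(a : ℚ) + d/2, b + d/2, c + d/2, d/2⟩ : Quaternion ℚ) ∈
      Subring.closure {(⟨0, 1, 0, 0⟩ : Quaternion ℚ), ⟨0, 0, 1, 0⟩, ⟨1/2, 1/2, 1/2, 1/2⟩} := by
  have hi : (⟨0,1,0,0⟩ : Quaternion ℚ) ∈ Subring.closure {(⟨0, 1, 0, 0⟩ : Quaternion ℚ), ⟨0, 0, 1, 0⟩, ⟨1/2, 1/2, 1/2, 1/2⟩} :=
    Subring.subset_closure (by simp)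
  have hj : (⟨0,0,1,0⟩ : Quaternion ℚ) ∈ Subring.closure {(⟨0, 1, 0, 0⟩ : Quaternion ℚ), ⟨0, 0, 1, 0⟩, ⟨1/2, 1/2, 1/2, 1/2⟩} :=
    Subring.subset_closure (by simp)
  have hw : (⟨1/2,1/2,1/2,1/2⟩ : Quaternion ℚ) ∈ Subring.closure {(⟨0, 1, 0, 0⟩ : Quaternion ℚ), ⟨0, 0, 1, 0⟩, ⟨1/2, 1/2, 1/2, 1/2⟩} :=
    Subring.subset_closure (by simp)
  have key : (⟨(a : ℚ) + d/2, b + d/2, c + d/2, d/2⟩ : Quaternion ℚ)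
      = (a : Quaternion ℚ) + (b : Quaternion ℚ) * qI + (c : Quaternion ℚ) * qJ
        + (d : Quaternion ℚ) * qW := by
    ext <;> simp only [Quaternion.re_add, Quaternion.imI_add, Quaternion.imJ_add, Quaternion.imK_add, Quaternion.re_mul, Quaternion.imI_mul, Quaternion.imJ_mul, Quaternion.imK_mul] <;> simp [qI, qJ, qW] <;> ring
  rw [key]
  exact add_mem (add_mem (add_mem (intCast_mem _ a)
    (mul_mem (intCast_mem _ b) (by exact hi))) (mul_mem (intCast_mem _ c) (by exact hj)))
    (mul_mem (intCast_mem _ d) (by exact hw))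

/-- The 24 integer 4-tuples `u` with `‖u‖² = 4`. -/
def T : Finset (ℤ × ℤ × ℤ × ℤ) :=
  {(2,0,0,0),(-2,0,0,0),(0,2,0,0),(0,-2,0,0),(0,0,2,0),(0,0,-2,0),(0,0,0,2),(0,0,0,-2),
   (1,1,1,1),(1,1,1,-1),(1,1,-1,1),(1,1,-1,-1),(1,-1,1,1),(1,-1,1,-1),(1,-1,-1,1),(1,-1,-1,-1),
   (-1,1,1,1),(-1,1,1,-1),(-1,1,-1,1),(-1,1,-1,-1),(-1,-1,1,1),(-1,-1,1,-1),(-1,-1,-1,1),(-1,-1,-1,-1)}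

lemma T_card : T.card = 24 := by decide

lemma mem_T {u₀ u₁ u₂ u₃ : ℤ} (h : u₀^2 + u₁^2 + u₂^2 + u₃^2 = 4) :
    (u₀, u₁, u₂, u₃) ∈ T := by
  have h0 : u₀^2 ≤ 4 := by nlinarith [sq_nonneg u₁, sq_nonneg u₂, sq_nonneg u₃]
  have h1 : u₁^2 ≤ 4 := by nlinarith [sq_nonneg u₀, sq_nonneg u₂, sq_nonneg u₃]
  have h2 : u₂^2 ≤ 4 := by nlinarith [sq_nonneg u₀, sq_nonneg u₁, sq_nonneg u₃]
  have h3 : u₃^2 ≤ 4 := by nlinarith [sq_nonneg u₀, sq_nonneg u₁, sq_nonneg u₂]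
  have b0 : -2 ≤ u₀ ∧ u₀ ≤ 2 := ⟨by nlinarith, by nlinarith⟩
  have b1 : -2 ≤ u₁ ∧ u₁ ≤ 2 := ⟨by nlinarith, by nlinarith⟩
  have b2 : -2 ≤ u₂ ∧ u₂ ≤ 2 := ⟨by nlinarith, by nlinarith⟩
  have b3 : -2 ≤ u₃ ∧ u₃ ≤ 2 := ⟨by nlinarith, by nlinarith⟩
  obtain ⟨l0, r0⟩ := b0; obtain ⟨l1, r1⟩ := b1; obtain ⟨l2, r2⟩ := b2; obtain ⟨l3, r3⟩ := b3
  clear h0 h1 h2 h3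
  interval_cases u₀ <;> interval_cases u₁ <;> interval_cases u₂ <;> interval_cases u₃ <;>
    revert h <;> decide

lemma T_parity : ∀ u ∈ T, u.1 % 2 = u.2.2.2 % 2 ∧ u.2.1 % 2 = u.2.2.2 % 2 ∧
    u.2.2.1 % 2 = u.2.2.2 % 2 ∧ u.1^2 + u.2.1^2 + u.2.2.1^2 + u.2.2.2^2 = 4 := by decide

/-- Map an integer 4-tuple `u` to the quaternion `u/2`. -/
def tq (u : ℤ × ℤ × ℤ × ℤ) : Quaternion ℚ :=
  ⟨(u.1 : ℚ)/2, (u.2.1 : ℚ)/2, (u.2.2.1 : ℚ)/2, (u.2.2.2 : ℚ)/2⟩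

lemma tq_injective : Function.Injective tq := by
  rintro ⟨a,b,c,d⟩ ⟨p,q,r,s⟩ h
  rw [Quaternion.ext_iff] at h
  obtain ⟨h1, h2, h3, h4⟩ := h
  simp only [tq, div_eq_div_iff (two_ne_zero (α := ℚ)) (two_ne_zero (α := ℚ))] at h1 h2 h3 h4
  have : a = p := by exact_mod_cast mul_right_cancel₀ (two_ne_zero (α := ℚ)) h1
  have : b = q := by exact_mod_cast mul_right_cancel₀ (two_ne_zero (α := ℚ)) h2
  have : c = r := by exact_mod_cast mul_right_cancel₀ (two_ne_zero (α := ℚ)) h3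
  have : d = s := by exact_mod_cast mul_right_cancel₀ (two_ne_zero (α := ℚ)) h4
  simp_all

/-- The unit shell of the Hurwitz order (the subring of the rational
quaternions generated by `i`, `j` and `(1 + i + j + k)/2`) has exactly 24
elements: the `D₄` root system, the 24-cell. -/
theorem hurwitz_unit_shell :
    ∀ H : Subring (Quaternion ℚ),
      H = Subring.closure {(⟨0, 1, 0, 0⟩ : Quaternion ℚ), ⟨0, 0, 1, 0⟩,
            ⟨1/2, 1/2, 1/2, 1/2⟩} →
      {x : Quaternion ℚ | x ∈ H ∧ Quaternion.normSq x = 1}.ncard = 24 := by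
  intro H hH
  subst hH
  have hle : Subring.closure {(⟨0, 1, 0, 0⟩ : Quaternion ℚ), ⟨0, 0, 1, 0⟩,
      ⟨1/2, 1/2, 1/2, 1/2⟩} ≤ Hur := by
    refine Subring.closure_le.mpr ?_
    rintro x hx
    simp only [Set.mem_insert_iff, Set.mem_singleton_iff] at hx
    rcases hx with rfl | rfl | rfl
    · exact ⟨0, 1, 0, 0, by ext <;> norm_num⟩
    · exact ⟨0, 0, 1, 0, by ext <;> norm_num⟩
    · exact ⟨0, 0, 0, 1, by ext <;> norm_num⟩
  have hset : {x : Quaternion ℚ | x ∈ Subring.closure {(⟨0, 1, 0, 0⟩ : Quaternion ℚ), ⟨0, 0, 1, 0⟩,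
      ⟨1/2, 1/2, 1/2, 1/2⟩} ∧ Quaternion.normSq x = 1} = tq '' ↑T := by
    ext x
    constructor
    · rintro ⟨hx, hn⟩
      obtain ⟨a, b, c, d, rfl⟩ := hle hx
      erw [Quaternion.normSq_def'] at hn
      have hq : ((2*a+d)^2 + (2*b+d)^2 + (2*c+d)^2 + d^2 : ℚ) = 4 := by
        push_cast at hn ⊢
        linear_combination 4 * hn
      have hz : (2*a+d)^2 + (2*b+d)^2 + (2*c+d)^2 + d^2 = 4 := by exact_mod_cast hq
      refine ⟨(2*a+d, 2*b+d, 2*c+d, d), mem_T hz, ?_⟩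
      simp only [tq]
      ext <;> push_cast <;> ring
    · rintro ⟨u, hu, rfl⟩
      obtain ⟨p1, p2, p3, hsq⟩ := T_parity u hu
      obtain ⟨u₀, u₁, u₂, u₃⟩ := u
      simp only at p1 p2 p3 hsq
      have h0 : u₀ = 2 * ((u₀ - u₃)/2) + u₃ := by omega
      have h1 : u₁ = 2 * ((u₁ - u₃)/2) + u₃ := by omega
      have h2 : u₂ = 2 * ((u₂ - u₃)/2) + u₃ := by omega
      constructor
      · have := hcoe_mem_closure ((u₀ - u₃)/2) ((u₁ - u₃)/2) ((u₂ - u₃)/2) u₃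
        convert this using 2 <;> simp only [tq] <;>
          · rw [show (u₀ : ℚ) = ((2 * ((u₀ - u₃)/2) + u₃ : ℤ) : ℚ) from congrArg (fun z : ℤ => (z : ℚ)) h0,
               show (u₁ : ℚ) = ((2 * ((u₁ - u₃)/2) + u₃ : ℤ) : ℚ) from congrArg (fun z : ℤ => (z : ℚ)) h1,
               show (u₂ : ℚ) = ((2 * ((u₂ - u₃)/2) + u₃ : ℤ) : ℚ) from congrArg (fun z : ℤ => (z : ℚ)) h2]
            push_cast
            ring
            exact Iff.rfl
      · rw [Quaternion.normSq_def']
        simp only [tq]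
        have : ((u₀^2 + u₁^2 + u₂^2 + u₃^2 : ℤ) : ℚ) = 4 := by exact_mod_cast hsq
        push_cast at this
        linear_combination this / 4
  erw [hset]
  rw [Set.ncard_image_of_injective _ tq_injective, Set.ncard_coe_finset, T_card]
end

section
/- The set of vectors v : Fin 8 → ℚ such that (either every coordinate v i is an integer, or every coordinate v i − 1/2 is an integer), the coordinate sum ∑ i, v i is an even integer, and ∑ i, (v i)² = 2, has exactly 240 elements. -/
def Q8 (w : Fin 8 → ℤ) : Prop := (∑ i, w i) % 4 = 0 ∧ ∑ i, (w i)^2 = 8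

instance : DecidablePred Q8 := fun w =>
  inferInstanceAs (Decidable ((∑ i, w i) % 4 = 0 ∧ ∑ i, (w i)^2 = 8))

def T1 : Finset (Fin 8 → ℤ) :=
  (Fintype.piFinset fun _ : Fin 8 => ({-2,0,2} : Finset ℤ)).filter Q8
def T2 : Finset (Fin 8 → ℤ) :=
  (Fintype.piFinset fun _ : Fin 8 => ({-1,1} : Finset ℤ)).filter Q8

set_option maxHeartbeats 8000000 in
set_option maxRecDepth 100000 in
lemma T1_card : T1.card = 112 := by decide

set_option maxHeartbeats 4000000 in
set_option maxRecDepth 100000 in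
lemma T2_card : T2.card = 128 := by decide

noncomputable def fhalf : (Fin 8 → ℤ) → (Fin 8 → ℚ) := fun w i => (w i : ℚ) / 2

lemma fhalf_inj : Function.Injective fhalf := by
  intro w w' h
  funext i
  have h2 := congrFun h i
  simp only [fhalf] at h2
  have : (w i : ℚ) = (w' i : ℚ) := by linarith
  exact_mod_cast this

lemma sum_half (w : Fin 8 → ℤ) : ∑ i, fhalf w i = ((∑ i, w i : ℤ) : ℚ) / 2 := by
  simp only [fhalf]
  rw [← Finset.sum_div]
  push_cast
  rfl

lemma sumsq_half (w : Fin 8 → ℤ) :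
    ∑ i, (fhalf w i) ^ 2 = ((∑ i, (w i)^2 : ℤ) : ℚ) / 4 := by
  simp only [fhalf, div_pow]
  rw [← Finset.sum_div]
  push_cast
  norm_num

lemma cond_iff (w : Fin 8 → ℤ) :
    ((∃ m : ℤ, ∑ i, fhalf w i = 2 * m) ∧ ∑ i, (fhalf w i) ^ 2 = 2) ↔ Q8 w := by
  rw [sum_half, sumsq_half]
  constructor
  · rintro ⟨⟨m, hm⟩, hsq⟩
    constructor
    · have : ((∑ i, w i : ℤ) : ℚ) = ((4 * m : ℤ) : ℚ) := by
        push_cast at hm ⊢; linarith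
      have h4 : (∑ i, w i) = 4 * m := by exact_mod_cast this
      omega
    · have : ((∑ i, (w i)^2 : ℤ) : ℚ) = ((8 : ℤ) : ℚ) := by
        push_cast at hsq ⊢; linarith
      exact_mod_cast this
  · rintro ⟨hmod, hsq⟩
    constructor
    · obtain ⟨m, hm⟩ : ∃ m : ℤ, ∑ i, w i = 4 * m := ⟨(∑ i, w i) / 4, by omega⟩
      exact ⟨m, by rw [hm]; push_cast; ring⟩
    · rw [hsq]; norm_num

/-- The `E₈` root system in the even coordinate system: vectors in `ℚ⁸` whose
coordinates are all integers or all half-odd-integers, with even coordinate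
sum and squared length 2; there are exactly 240 of them. -/
theorem e8_roots_card :
    {v : Fin 8 → ℚ |
        ((∀ i, ∃ n : ℤ, v i = n) ∨ (∀ i, ∃ n : ℤ, v i - 1/2 = n)) ∧
        (∃ m : ℤ, ∑ i, v i = 2 * m) ∧
        ∑ i, (v i) ^ 2 = 2}.ncard = 240 := by
  have hset : {v : Fin 8 → ℚ |
        ((∀ i, ∃ n : ℤ, v i = n) ∨ (∀ i, ∃ n : ℤ, v i - 1/2 = n)) ∧
        (∃ m : ℤ, ∑ i, v i = 2 * m) ∧
        ∑ i, (v i) ^ 2 = 2} = fhalf '' ↑(T1 ∪ T2) := by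
    ext v
    simp only [Set.mem_setOf_eq, Set.mem_image, Finset.coe_union, Set.mem_union,
      Finset.mem_coe, T1, T2, Finset.mem_filter, Fintype.mem_piFinset,
      Finset.mem_insert, Finset.mem_singleton]
    constructor
    · rintro ⟨h1, h2, h3⟩
      have hbd : ∀ i, (v i) ^ 2 ≤ 2 := by
        intro i
        calc (v i) ^ 2 ≤ ∑ j, (v j) ^ 2 :=
              Finset.single_le_sum (f := fun j => (v j) ^ 2)
                (fun j _ => sq_nonneg _) (Finset.mem_univ i)
          _ = 2 := h3
      rcases h1 with h1 | h1
      · choose n hn using h1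
        refine ⟨fun i => 2 * n i, Or.inl ⟨?_, ?_⟩, ?_⟩
        · intro i
          have hle : ((n i : ℚ)) ^ 2 ≤ 2 := by rw [← hn i]; exact hbd i
          have hle' : (n i) ^ 2 ≤ 2 := by exact_mod_cast hle
          have hl : -1 ≤ n i := by nlinarith
          have hu : n i ≤ 1 := by nlinarith
          show 2 * n i = -2 ∨ 2 * n i = 0 ∨ 2 * n i = 2
          omega
        · rw [← cond_iff]
          have hv : fhalf (fun i => 2 * n i) = v := by
            funext i
            simp only [fhalf]
            rw [hn i]
            push_cast
            ring
          rw [hv]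
          exact ⟨h2, h3⟩
        · funext i
          simp only [fhalf]
          rw [hn i]
          push_cast
          ring
      · choose n hn using h1
        have hv : ∀ i, v i = (n i : ℚ) + 1/2 := fun i => by linarith [hn i]
        refine ⟨fun i => 2 * n i + 1, Or.inr ⟨?_, ?_⟩, ?_⟩
        · intro i
          have hle : ((n i : ℚ) + 1/2) ^ 2 ≤ 2 := by rw [← hv i]; exact hbd i
          have hle2 : (((2 * n i + 1 : ℤ) : ℚ)) ^ 2 ≤ 8 := by push_cast; nlinarith
          have hle' : (2 * n i + 1) ^ 2 ≤ 8 := by exact_mod_cast hle2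
          have hl : -1 ≤ n i := by nlinarith
          have hu : n i ≤ 0 := by nlinarith
          show 2 * n i + 1 = -1 ∨ 2 * n i + 1 = 1
          omega
        · rw [← cond_iff]
          have hveq : fhalf (fun i => 2 * n i + 1) = v := by
            funext i
            simp only [fhalf]
            rw [hv i]
            push_cast
            ring
          rw [hveq]
          exact ⟨h2, h3⟩
        · funext i
          simp only [fhalf]
          rw [hv i]
          push_cast
          ring
    · rintro ⟨w, hw | hw, rfl⟩
      · obtain ⟨hmem, hQ⟩ := hw
        obtain ⟨h2, h3⟩ := (cond_iff w).mpr hQ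
        refine ⟨Or.inl fun i => ?_, h2, h3⟩
        rcases hmem i with h | h | h
        · exact ⟨-1, by simp only [fhalf]; rw [h]; norm_num⟩
        · exact ⟨0, by simp only [fhalf]; rw [h]; norm_num⟩
        · exact ⟨1, by simp only [fhalf]; rw [h]; norm_num⟩
      · obtain ⟨hmem, hQ⟩ := hw
        obtain ⟨h2, h3⟩ := (cond_iff w).mpr hQ
        refine ⟨Or.inr fun i => ?_, h2, h3⟩
        rcases hmem i with h | h
        · exact ⟨-1, by simp only [fhalf]; rw [h]; norm_num⟩
        · exact ⟨0, by simp only [fhalf]; rw [h]; norm_num⟩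
  rw [hset, Set.ncard_image_of_injective _ fhalf_inj, Set.ncard_coe_finset]
  have hdisj : Disjoint T1 T2 := by
    rw [Finset.disjoint_left]
    intro w hw1 hw2
    simp only [T1, T2, Finset.mem_filter, Fintype.mem_piFinset, Finset.mem_insert,
      Finset.mem_singleton] at hw1 hw2
    have h1 := hw1.1 0
    have h2 := hw2.1 0
    omega
  rw [Finset.card_union_of_disjoint hdisj, T1_card, T2_card]
end

section
/- Let K be the cyclotomic field ℚ(ζ₁₀) (CyclotomicField 10 ℚ) and 𝓞 its ring of integers. The set {z : 𝓞 | for every ring homomorphism σ : K →+* ℂ, ‖σ z‖ = 1} equals the set {z : 𝓞 | z^10 = 1} of 10th roots of unity, and it has exactly 10 elements. -/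
open NumberField Polynomial

private lemma cyclo10_isCyclotomic : IsCyclotomicExtension {10} ℚ (CyclotomicField 10 ℚ) :=
  CyclotomicField.isCyclotomicExtension 10 ℚ

attribute [local instance] cyclo10_isCyclotomic

private lemma cyclo10_numberField : NumberField (CyclotomicField 10 ℚ) :=
  IsCyclotomicExtension.numberField {10} ℚ _

attribute [local instance] cyclo10_numberField

private lemma cyclo10_set_eq :
    {z : 𝓞 (CyclotomicField 10 ℚ) |
        ∀ σ : CyclotomicField 10 ℚ →+* ℂ, ‖σ (z : CyclotomicField 10 ℚ)‖ = 1} =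
      {z : 𝓞 (CyclotomicField 10 ℚ) | z ^ 10 = 1} := by
  set K := CyclotomicField 10 ℚ
  have hζ : IsPrimitiveRoot (IsCyclotomicExtension.zeta 10 ℚ K) ((10 : ℕ+) : ℕ) :=
    IsCyclotomicExtension.zeta_spec 10 ℚ K
  have hfr : Module.finrank ℚ K = 4 := by
    rw [IsCyclotomicExtension.finrank (n := 10) K
      (Polynomial.cyclotomic.irreducible_rat (by norm_num))]
    decide
  ext z
  simp only [Set.mem_setOf_eq]
  constructor
  · intro h
    obtain ⟨n, hn, hzn⟩ := Embeddings.pow_eq_one_of_norm_eq_one K ℂ z.isIntegral_coe h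
    have hfin : IsOfFinOrder (z : K) := isOfFinOrder_iff_pow_eq_one.2 ⟨n, hn, hzn⟩
    have hord : IsPrimitiveRoot (z : K) (orderOf (z : K)) := IsPrimitiveRoot.orderOf _
    have hl0 : orderOf (z : K) ≠ 0 := (hfin.orderOf_pos).ne'
    have h20 : orderOf (z : K) ∣ 2 * ((10 : ℕ+) : ℕ) :=
      hord.dvd_of_isCyclotomicExtension 10 hl0
    have h10 : orderOf (z : K) ∣ 10 := by
      by_contra hnot
      have hmem : orderOf (z : K) ∈ Nat.divisors 20 :=
        Nat.mem_divisors.2 ⟨by simpa using h20, by norm_num⟩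
      have hdiv : Nat.divisors 20 = {1, 2, 4, 5, 10, 20} := by decide
      rw [hdiv] at hmem
      simp only [Finset.mem_insert, Finset.mem_singleton] at hmem
      have key := hord.lcm_totient_le_finrank hζ
        (Polynomial.cyclotomic.irreducible_rat
          (Nat.lcm_pos hfin.orderOf_pos (by norm_num)))
      rw [hfr] at key
      rcases hmem with h | h | h | h | h | h
      · rw [h] at hnot; exact hnot (by norm_num)
      · rw [h] at hnot; exact hnot (by norm_num)
      · rw [h] at key
        norm_num [Nat.lcm] at key
        exact absurd key (by decide)
      · rw [h] at hnot; exact hnot (by norm_num)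
      · rw [h] at hnot; exact hnot (by norm_num)
      · rw [h] at key
        norm_num [Nat.lcm] at key
        exact absurd key (by decide)
    have : (z : K) ^ 10 = 1 := by
      obtain ⟨c, hc⟩ := h10
      have e : (z : K) ^ (orderOf (z : K) * c) = 1 := by
        rw [pow_mul, pow_orderOf_eq_one, one_pow]
      rwa [← hc] at e
    apply RingOfIntegers.coe_injective
    rw [map_pow, map_one]
    exact this
  · intro h σ
    have h1 : (σ (z : K)) ^ 10 = 1 := by
      rw [← map_pow, show ((z : K)) = algebraMap (𝓞 K) K z from rfl, ← map_pow, h,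
        map_one, map_one]
    have h2 : ‖σ (z : K)‖ ^ 10 = 1 := by rw [← norm_pow, h1, norm_one]
    have := pow_left_strictMonoOn₀ (M₀ := ℝ) (n := 10) (by norm_num)
    have h3 : ‖σ (z : K)‖ ^ 10 = (1 : ℝ) ^ 10 := by rw [h2, one_pow]
    exact this.injOn (Set.mem_setOf_eq ▸ norm_nonneg _)
      (Set.mem_setOf_eq ▸ zero_le_one) h3

/-- The unit shell of the ring of integers of `ℚ(ζ₁₀)`: the elements all of
whose complex embeddings have absolute value 1 are exactly the 10th roots of
unity, and there are exactly 10 of them (the decagon `H₂`). -/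
theorem cyclotomic10_unit_shell :
    {z : 𝓞 (CyclotomicField 10 ℚ) |
        ∀ σ : CyclotomicField 10 ℚ →+* ℂ, ‖σ (z : CyclotomicField 10 ℚ)‖ = 1} =
      {z : 𝓞 (CyclotomicField 10 ℚ) | z ^ 10 = 1} ∧
    {z : 𝓞 (CyclotomicField 10 ℚ) |
        ∀ σ : CyclotomicField 10 ℚ →+* ℂ,
          ‖σ (z : CyclotomicField 10 ℚ)‖ = 1}.ncard = 10 := by
  refine ⟨cyclo10_set_eq, ?_⟩
  rw [cyclo10_set_eq]
  set K := CyclotomicField 10 ℚ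
  have hζ : IsPrimitiveRoot (IsCyclotomicExtension.zeta 10 ℚ K) ((10 : ℕ+) : ℕ) :=
    IsCyclotomicExtension.zeta_spec 10 ℚ K
  have hζO : IsPrimitiveRoot hζ.toInteger 10 := by
    simpa using hζ.toInteger_isPrimitiveRoot
  have hset : {z : 𝓞 K | z ^ 10 = 1} = ↑(Polynomial.nthRootsFinset 10 (1 : 𝓞 K)) := by
    ext z
    simp [Polynomial.mem_nthRootsFinset (by norm_num : (0:ℕ) < 10)]
  rw [hset, Set.ncard_coe_finset, hζO.card_nthRootsFinset]
end

section
/- Let K be the cyclotomic field ℚ(ζ₁₀) (CyclotomicField 10 ℚ) and 𝓞 its ring of integers. The set {p : 𝓞 × 𝓞 | for every ring homomorphism σ : K →+* ℂ, ‖σ p.1‖² + ‖σ p.2‖² = 1} equals the axis set {(x, 0) : x^10 = 1} ∪ {(0, y) : y^10 = 1}, and it has exactly 20 elements. -/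
open NumberField Polynomial

local notation "K10" => CyclotomicField 10 ℚ

instance : IsCyclotomicExtension {10} ℚ (CyclotomicField 10 ℚ) :=
  CyclotomicField.isCyclotomicExtension 10 ℚ

noncomputable instance : NumberField (CyclotomicField 10 ℚ) :=
  IsCyclotomicExtension.numberField {10} ℚ (CyclotomicField 10 ℚ)

lemma pow10_of_norm_one {x : 𝓞 K10} (hx : ∀ σ : K10 →+* ℂ, ‖σ (x : K10)‖ = 1) :
    x ^ 10 = 1 := by
  obtain ⟨n, hn, hxn⟩ := NumberField.Embeddings.pow_eq_one_of_norm_eq_one K10 ℂ x.isIntegral_coe hx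
  have hfin : IsOfFinOrder (x : K10) := isOfFinOrder_iff_pow_eq_one.2 ⟨n, hn, hxn⟩
  have hprim : IsPrimitiveRoot (x : K10) (orderOf (x : K10)) := IsPrimitiveRoot.orderOf _
  have hl0 : orderOf (x : K10) ≠ 0 := (orderOf_pos_iff.2 hfin).ne'
  have hdvd : orderOf (x : K10) ∣ 2 * (10 : ℕ) :=
    hprim.dvd_of_isCyclotomicExtension 10 hl0
  set l := orderOf (x : K10) with hldef
  have h20 : l ∣ 20 := by simpa using hdvd
  have hcase : l ∣ 10 ∨ 4 ∣ l := by
    have hle := Nat.le_of_dvd (by norm_num) h20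
    interval_cases l <;> omega
  rcases hcase with h | h
  · have hx10 : (x : K10) ^ 10 = 1 := by
      rcases h with ⟨c, hc⟩
      have := hprim.pow_eq_one
      calc (x : K10) ^ 10 = ((x : K10) ^ l) ^ c := by rw [← pow_mul, ← hc]
        _ = 1 := by rw [this, one_pow]
    have : (algebraMap (𝓞 K10) K10) (x ^ 10) = (algebraMap (𝓞 K10) K10) 1 := by
      push_cast
      simpa using hx10
    exact RingOfIntegers.coe_injective this
  · exfalso
    obtain ⟨m, hm⟩ := h
    have h4 : IsPrimitiveRoot ((x : K10) ^ m) 4 :=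
      hprim.pow (Nat.pos_of_ne_zero hl0) (by omega)
    have hirr : Irreducible (cyclotomic (Nat.lcm 4 (10 : ℕ)) ℚ) := by
      norm_num [Nat.lcm]
      exact cyclotomic.irreducible_rat (by norm_num)
    have key := h4.lcm_totient_le_finrank (IsCyclotomicExtension.zeta_spec 10 ℚ K10) hirr
    rw [IsCyclotomicExtension.finrank (n := 10) K10
      (cyclotomic.irreducible_rat (by norm_num))] at key
    norm_num [Nat.lcm] at key
    rw [show (20 : ℕ).totient = 8 by decide, show (10 : ℕ).totient = 4 by decide] at key
    omega

lemma one_le_prodW {a : 𝓞 K10} (ha : a ≠ 0) :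
    (1 : ℝ) ≤ ∏ w : InfinitePlace K10, (w (a : K10)) ^ w.mult := by
  rw [InfinitePlace.prod_eq_abs_norm]
  have h1 : (1 : ℤ) ≤ |Algebra.norm ℤ a| := Int.one_le_abs (Algebra.norm_ne_zero_iff.mpr ha)
  have h2 : (Algebra.norm ℚ (a : K10)) = ((Algebra.norm ℤ a : ℤ) : ℚ) :=
    (Algebra.coe_norm_int a).symm
  rw [h2]
  push_cast
  exact_mod_cast h1

lemma not_both_ne {x y : 𝓞 K10}
    (h : ∀ σ : K10 →+* ℂ, ‖σ (x : K10)‖ ^ 2 + ‖σ (y : K10)‖ ^ 2 = 1)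
    (hx : x ≠ 0) (hy : y ≠ 0) : False := by
  have hw : ∀ w : InfinitePlace K10, (w (x : K10)) * (w (y : K10)) ≤ 1 / 2 := by
    intro w
    have h1 := h w.embedding
    rw [InfinitePlace.norm_embedding_eq, InfinitePlace.norm_embedding_eq] at h1
    nlinarith [sq_nonneg (w (x : K10) - w (y : K10))]
  have hprod : (1 : ℝ) ≤ ∏ w : InfinitePlace K10, ((w (x : K10)) * (w (y : K10))) ^ w.mult := by
    have := mul_le_mul (one_le_prodW hx) (one_le_prodW hy) (by norm_num)
      (le_trans zero_le_one (one_le_prodW hx))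
    rw [one_mul, ← Finset.prod_mul_distrib] at this
    simpa [mul_pow] using this
  have hle : ∏ w : InfinitePlace K10, ((w (x : K10)) * (w (y : K10))) ^ w.mult ≤
      ∏ w : InfinitePlace K10, (1 / 2 : ℝ) ^ w.mult := by
    refine Finset.prod_le_prod (fun w _ => ?_) (fun w _ => ?_)
    · exact pow_nonneg (mul_nonneg (apply_nonneg _ _) (apply_nonneg _ _)) _
    · exact pow_le_pow_left₀ (mul_nonneg (apply_nonneg _ _) (apply_nonneg _ _)) (hw w) _
  have hsum : ∏ w : InfinitePlace K10, (1 / 2 : ℝ) ^ w.mult =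
      (1 / 2 : ℝ) ^ (Module.finrank ℚ K10) := by
    rw [Finset.prod_pow_eq_pow_sum, NumberField.InfinitePlace.sum_mult_eq]
  have hfr : 1 ≤ Module.finrank ℚ K10 := Module.finrank_pos
  have hlt : (1 / 2 : ℝ) ^ (Module.finrank ℚ K10) < 1 := by
    apply pow_lt_one₀ (by norm_num) (by norm_num) (by omega)
  linarith [hprod.trans (hle.trans_eq hsum)]

lemma rootSet_eq : {x : 𝓞 K10 | x ^ 10 = 1} = ↑(nthRootsFinset 10 (1 : 𝓞 K10)) := by
  ext x
  simp [Polynomial.mem_nthRootsFinset (by norm_num : 0 < 10)]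

lemma ncard_roots10 : {x : 𝓞 K10 | x ^ 10 = 1}.ncard = 10 := by
  rw [rootSet_eq, Set.ncard_coe_finset]
  have hζ := (IsCyclotomicExtension.zeta_spec 10 ℚ K10).toInteger_isPrimitiveRoot
  have h10 : ((10 : ℕ+) : ℕ) = 10 := rfl
  have := hζ.card_nthRootsFinset
  exact this

lemma norm_one_of_pow10 {x : 𝓞 K10} (h : x ^ 10 = 1) (σ : K10 →+* ℂ) :
    ‖σ (x : K10)‖ = 1 := by
  have hK : (x : K10) ^ 10 = 1 := by
    have := congrArg (algebraMap (𝓞 K10) K10) h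
    push_cast at this
    simpa using this
  have h1 : ‖σ (x : K10)‖ ^ 10 = 1 := by
    rw [← norm_pow, ← map_pow, hK]
    simp
  rcases lt_trichotomy ‖σ (x : K10)‖ 1 with hlt | heq | hgt
  · exfalso
    have := pow_lt_one₀ (norm_nonneg (σ (x : K10))) hlt (by norm_num : (10 : ℕ) ≠ 0)
    rw [h1] at this
    exact lt_irrefl 1 this
  · exact heq
  · exfalso
    have := one_lt_pow₀ hgt (by norm_num : (10 : ℕ) ≠ 0)
    rw [h1] at this
    exact lt_irrefl 1 this

/-- The unit shell of the integral plane of `ℤ[ζ₁₀]` (pairs whose embedded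
squared norms sum to 1 under every complex embedding) equals the axis set of
10th roots of unity, and has exactly 20 elements: the root-shell system
`H₂ ⊕ H₂`, the decagonal tegum. -/
theorem cyclotomic10_plane_shell :
    {p : 𝓞 (CyclotomicField 10 ℚ) × 𝓞 (CyclotomicField 10 ℚ) |
        ∀ σ : CyclotomicField 10 ℚ →+* ℂ,
          ‖σ (p.1 : CyclotomicField 10 ℚ)‖ ^ 2 +
            ‖σ (p.2 : CyclotomicField 10 ℚ)‖ ^ 2 = 1} =
      ({p : 𝓞 (CyclotomicField 10 ℚ) × 𝓞 (CyclotomicField 10 ℚ) |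
          p.1 ^ 10 = 1 ∧ p.2 = 0} ∪
       {p : 𝓞 (CyclotomicField 10 ℚ) × 𝓞 (CyclotomicField 10 ℚ) |
          p.1 = 0 ∧ p.2 ^ 10 = 1}) ∧
    {p : 𝓞 (CyclotomicField 10 ℚ) × 𝓞 (CyclotomicField 10 ℚ) |
        ∀ σ : CyclotomicField 10 ℚ →+* ℂ,
          ‖σ (p.1 : CyclotomicField 10 ℚ)‖ ^ 2 +
            ‖σ (p.2 : CyclotomicField 10 ℚ)‖ ^ 2 = 1}.ncard = 20 := by
  have hzero : ∀ σ : K10 →+* ℂ, ‖σ ((0 : 𝓞 K10) : K10)‖ = 0 := by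
    intro σ
    simp
  have hset : {p : 𝓞 K10 × 𝓞 K10 |
        ∀ σ : K10 →+* ℂ, ‖σ (p.1 : K10)‖ ^ 2 + ‖σ (p.2 : K10)‖ ^ 2 = 1} =
      ({p : 𝓞 K10 × 𝓞 K10 | p.1 ^ 10 = 1 ∧ p.2 = 0} ∪
       {p : 𝓞 K10 × 𝓞 K10 | p.1 = 0 ∧ p.2 ^ 10 = 1}) := by
    ext p
    simp only [Set.mem_setOf_eq, Set.mem_union]
    constructor
    · intro hp
      by_cases hx : p.1 = 0
      · right
        refine ⟨hx, pow10_of_norm_one (fun σ => ?_)⟩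
        have h1 := hp σ
        rw [hx] at h1
        rw [hzero σ] at h1
        have h2 : ‖σ (p.2 : K10)‖ ^ 2 = 1 := by linarith [h1]
        nlinarith [norm_nonneg (σ (p.2 : K10))]
      · by_cases hy : p.2 = 0
        · left
          refine ⟨pow10_of_norm_one (fun σ => ?_), hy⟩
          have h1 := hp σ
          rw [hy] at h1
          rw [hzero σ] at h1
          have h2 : ‖σ (p.1 : K10)‖ ^ 2 = 1 := by linarith [h1]
          nlinarith [norm_nonneg (σ (p.1 : K10))]
        · exact (not_both_ne hp hx hy).elim
    · rintro (⟨h1, h2⟩ | ⟨h1, h2⟩) σ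
      · rw [h2, hzero σ, norm_one_of_pow10 h1 σ]
        norm_num
      · rw [h1, hzero σ, norm_one_of_pow10 h2 σ]
        norm_num
  refine ⟨hset, ?_⟩
  rw [hset]
  have hS1 : {p : 𝓞 K10 × 𝓞 K10 | p.1 ^ 10 = 1 ∧ p.2 = 0} =
      (fun x : 𝓞 K10 => (x, (0 : 𝓞 K10))) '' {x : 𝓞 K10 | x ^ 10 = 1} := by
    ext ⟨a, b⟩
    constructor
    · rintro ⟨h1, h2⟩
      exact ⟨a, h1, by simp [h2.symm]⟩
    · rintro ⟨x, hx, hxy⟩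
      obtain ⟨rfl, rfl⟩ := Prod.mk.injEq .. ▸ hxy
      exact ⟨hx, rfl⟩
  have hS2 : {p : 𝓞 K10 × 𝓞 K10 | p.1 = 0 ∧ p.2 ^ 10 = 1} =
      (fun x : 𝓞 K10 => ((0 : 𝓞 K10), x)) '' {x : 𝓞 K10 | x ^ 10 = 1} := by
    ext ⟨a, b⟩
    constructor
    · rintro ⟨h1, h2⟩
      exact ⟨b, h2, by simp [h1.symm]⟩
    · rintro ⟨x, hx, hxy⟩
      obtain ⟨rfl, rfl⟩ := Prod.mk.injEq .. ▸ hxy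
      exact ⟨rfl, hx⟩
  have hfin : {x : 𝓞 K10 | x ^ 10 = 1}.Finite := by
    rw [rootSet_eq]
    exact (nthRootsFinset 10 (1 : 𝓞 K10)).finite_toSet
  have hinj1 : Function.Injective (fun x : 𝓞 K10 => (x, (0 : 𝓞 K10))) :=
    fun a b h => congrArg Prod.fst h
  have hinj2 : Function.Injective (fun x : 𝓞 K10 => ((0 : 𝓞 K10), x)) :=
    fun a b h => congrArg Prod.snd h
  have hdisj : Disjoint {p : 𝓞 K10 × 𝓞 K10 | p.1 ^ 10 = 1 ∧ p.2 = 0}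
      {p : 𝓞 K10 × 𝓞 K10 | p.1 = 0 ∧ p.2 ^ 10 = 1} := by
    rw [Set.disjoint_left]
    rintro p ⟨h1, h2⟩ ⟨h3, h4⟩
    rw [h3] at h1
    simp at h1
  rw [Set.ncard_union_eq hdisj (hS1 ▸ hfin.image _) (hS2 ▸ hfin.image _),
    hS1, hS2, Set.ncard_image_of_injective _ hinj1, Set.ncard_image_of_injective _ hinj2,
    ncard_roots10]
end

section
/- For every positive integer m and all rationals q, r: if 2·cos(π/m) = q + r·√5, then m ≤ 6. In particular, among the dihedral angles π/m with m ≥ 5, only m = 5 yields a value of 2·cos(π/m) lying in the quadratic field ℚ(√5). -/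
open Polynomial

/-- If `φ(n) ≤ 4` then `n ≤ 12`. -/
lemma totient_le_four_imp_le_twelve : ∀ n : ℕ, Nat.totient n ≤ 4 → n ≤ 12 := by
  intro n
  induction n using Nat.strong_induction_on with
  | _ n ih =>
    intro h
    by_contra hn
    push_neg at hn
    have hn0 : 0 < n := by omega
    have hφpos : 0 < Nat.totient n := Nat.totient_pos.mpr hn0
    set p := n.minFac with hp_def
    have hp : p.Prime := Nat.minFac_prime (by omega)
    have hpd : p ∣ n := Nat.minFac_dvd n
    -- every prime factor is at most 5
    have hφp : Nat.totient p ∣ Nat.totient n := Nat.totient_dvd_of_dvd hpd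
    have hp5 : p ≤ 5 := by
      have h1 : Nat.totient p ≤ Nat.totient n := Nat.le_of_dvd hφpos hφp
      have h2 : Nat.totient p = p - 1 := Nat.totient_prime hp
      have := hp.two_le
      omega
    obtain ⟨k, hk⟩ := hpd
    have hk0 : 0 < k := Nat.pos_of_ne_zero (fun h0 => by rw [h0, mul_zero] at hk; omega)
    have hklt : k < n := by
      have := hp.two_le
      calc k < 2 * k := by omega
        _ ≤ p * k := Nat.mul_le_mul_right k (by omega)
        _ = n := hk.symm
    have hkd : k ∣ n := ⟨p, by rw [hk, mul_comm]⟩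
    have hφk : Nat.totient k ≤ 4 :=
      le_trans (Nat.le_of_dvd hφpos (Nat.totient_dvd_of_dvd hkd)) h
    have hk12 : k ≤ 12 := ih k hklt hφk
    have hn60 : n ≤ 60 := by
      rw [hk]
      calc p * k ≤ 5 * 12 := Nat.mul_le_mul hp5 hk12
        _ = 60 := by norm_num
    interval_cases n <;> revert h <;> decide

/-- If `2 cos(π/m)` lies in the quadratic field `ℚ(√5)`, then `m ≤ 6`.  This is
the number-theoretic step excluding the dihedral systems `I₂(m)`, `m ≥ 7`,
from being root-shell systems over `ℤ[φ]`. -/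
theorem two_cos_pi_div_in_sqrt5_imp_le_six :
    ∀ m : ℕ, 0 < m → ∀ q r : ℚ,
      2 * Real.cos (Real.pi / m) = (q : ℝ) + (r : ℝ) * Real.sqrt 5 → m ≤ 6 := by
  intro m hm q r h
  -- the primitive (2m)-th root of unity ζ = e^{iπ/m}
  set x : ℝ := Real.pi / m with hx
  set ζ : ℂ := Complex.exp (x * Complex.I) with hζ
  have h2m : (2 * m : ℕ) ≠ 0 := by positivity
  have hprim : IsPrimitiveRoot ζ (2 * m) := by
    have hm' : (m : ℂ) ≠ 0 := Nat.cast_ne_zero.mpr hm.ne'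
    have harg : ((x : ℝ) : ℂ) * Complex.I = 2 * (Real.pi : ℂ) * Complex.I / ((2 * m : ℕ) : ℂ) := by
      rw [hx]
      push_cast
      field_simp
    rw [hζ, harg]
    exact Complex.isPrimitiveRoot_exp (2 * m) h2m
  -- ζ satisfies ζ² - (q + r√5) ζ + 1 = 0
  have hz : ζ ^ 2 - ((q : ℂ) + (r : ℂ) * (Real.sqrt 5 : ℝ)) * ζ + 1 = 0 := by
    have h1 : ζ * Complex.exp (-(x * Complex.I)) = 1 := by
      rw [hζ, ← Complex.exp_add]; simp
    have h2 : ζ + Complex.exp (-(x * Complex.I)) = 2 * Complex.cos x := by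
      rw [hζ, Complex.two_cos]
      ring_nf
    have h3 : (2 : ℂ) * Complex.cos x = (q : ℂ) + (r : ℂ) * (Real.sqrt 5 : ℝ) := by
      calc (2 : ℂ) * Complex.cos x = ((2 * Real.cos x : ℝ) : ℂ) := by
            push_cast [Complex.ofReal_cos]; ring
        _ = (q : ℂ) + (r : ℂ) * (Real.sqrt 5 : ℝ) := by rw [h]; push_cast; ring
    have h4 : ζ + Complex.exp (-(x * Complex.I))
        = (q : ℂ) + (r : ℂ) * (Real.sqrt 5 : ℝ) := by rw [h2, h3]
    linear_combination ζ * h4 - h1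
  -- the quartic over ℚ killing ζ
  set P : ℚ[X] := (X ^ 2 - C q * X + 1) ^ 2 - C (5 * r ^ 2) * X ^ 2 with hP
  have hsq : ((Real.sqrt 5 : ℝ) : ℂ) ^ 2 = 5 := by
    rw [← Complex.ofReal_pow, Real.sq_sqrt (by norm_num : (5:ℝ) ≥ 0)]
    norm_num
  have hPζ : Polynomial.aeval ζ P = 0 := by
    rw [hP]
    simp only [map_sub, map_add, map_pow, map_mul, map_one, aeval_X, aeval_C, eq_ratCast]
    have hz' : ζ ^ 2 - (q : ℂ) * ζ + 1 = (r : ℂ) * (Real.sqrt 5 : ℝ) * ζ := by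
      linear_combination hz
    push_cast
    linear_combination (ζ ^ 2 - (q : ℂ) * ζ + 1 + (r : ℂ) * (Real.sqrt 5 : ℝ) * ζ) * hz'
      + (r : ℂ) ^ 2 * ζ ^ 2 * hsq
  have hPdeg : P.natDegree = 4 := by
    rw [hP]
    compute_degree!
  have hP0 : P ≠ 0 := fun h0 => by simp [h0] at hPdeg
  -- hence the minimal polynomial of ζ has degree at most 4
  have hmin : (minpoly ℚ ζ).degree ≤ P.degree := minpoly.degree_le_of_ne_zero ℚ ζ hP0 hPζ
  have hmin' : (minpoly ℚ ζ).natDegree ≤ 4 := by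
    have : (minpoly ℚ ζ).natDegree ≤ P.natDegree := natDegree_le_natDegree hmin
    omega
  -- but this degree is φ(2m)
  have hcyc : cyclotomic (2 * m) ℚ = minpoly ℚ ζ :=
    cyclotomic_eq_minpoly_rat hprim (by positivity)
  have htot : Nat.totient (2 * m) ≤ 4 := by
    rw [← natDegree_cyclotomic (2 * m) ℚ, hcyc]
    exact hmin'
  have := totient_le_four_imp_le_twelve (2 * m) htot
  omega
end
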